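/- Let Y be an ℕ-valued random variable with E[R^Y] ≤ M for some R > 1, and let g_Y(y) = E[y^Y]. Define h_Y(x) := (1 − g_Y(1−x))/x for 0 < |x| < R−1, extended by h_Y(0) := E[Y]. Then h_Y is analytic on {x ∈ ℂ : |x| < R−1}, with h_Y(x) = Σ_{n≥0} (−1)^n·E[binom(Y, n+1)]·x^n; in particular h_Y(0) = E[Y] and h_Y'(0) = −E[Y(Y−1)]/2. -/

import Mathlib

open MeasureTheory Metric
open scoped ENNReal NNReal

theorem hY_analytic_series
    {Ω : Type*} [MeasurableSpace Ω] (μ : Measure Ω) [IsProbabilityMeasure μ]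
    (Y : Ω → ℕ) (hY : Measurable Y) (R M : ℝ) (hR : 1 < R)
    (hint : Integrable (fun ω => R ^ Y ω) μ) (hM : ∫ ω, R ^ Y ω ∂μ ≤ M) :
    ∃ h : ℂ → ℂ,
      AnalyticOnNhd ℂ h (ball (0 : ℂ) (R - 1)) ∧
      (∀ x ∈ ball (0 : ℂ) (R - 1), x ≠ 0 →
        h x = (1 - ∫ ω, (1 - x) ^ Y ω ∂μ) / x) ∧
      h 0 = ∫ ω, (Y ω : ℂ) ∂μ ∧
      (∀ x ∈ ball (0 : ℂ) (R - 1),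
        h x = ∑' n : ℕ, (-1) ^ n * (∫ ω, ((Y ω).choose (n + 1) : ℂ) ∂μ) * x ^ n) ∧
      deriv h 0 = -(∫ ω, (Y ω : ℂ) * ((Y ω : ℂ) - 1) ∂μ) / 2 := by
  have hRpos : (0 : ℝ) < R := lt_trans one_pos hR
  set s : ℝ := R - 1 with hs_def
  have hs : 0 < s := sub_pos.mpr hR
  -- the basic combinatorial bound
  have hchoose : ∀ n k : ℕ, (n.choose k : ℝ) * s ^ k ≤ R ^ n := by
    intro n k
    rcases le_or_gt k n with hk | hk
    · have h1 : (s + 1) ^ n =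
          ∑ j ∈ Finset.range (n + 1), s ^ j * (1 : ℝ) ^ (n - j) * (n.choose j : ℝ) :=
        add_pow s 1 n
      have h2 : s ^ k * (1 : ℝ) ^ (n - k) * (n.choose k : ℝ) ≤
          ∑ j ∈ Finset.range (n + 1), s ^ j * (1 : ℝ) ^ (n - j) * (n.choose j : ℝ) :=
        Finset.single_le_sum (f := fun j => s ^ j * (1 : ℝ) ^ (n - j) * (n.choose j : ℝ))
          (fun j _ => by positivity) (Finset.mem_range.mpr (Nat.lt_succ_of_le hk))
      have h3 : s + 1 = R := by ring
      calc (n.choose k : ℝ) * s ^ k = s ^ k * (1 : ℝ) ^ (n - k) * (n.choose k : ℝ) := by ring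
        _ ≤ (s + 1) ^ n := h1 ▸ h2
        _ = R ^ n := by rw [h3]
    · simp [Nat.choose_eq_zero_of_lt hk, le_of_lt (pow_pos hRpos n)]
  have hbound : ∀ (k : ℕ) (ω : Ω), ((Y ω).choose k : ℝ) ≤ (s ^ k)⁻¹ * R ^ Y ω := by
    intro k ω
    have h2 := hchoose (Y ω) k
    have hsk : (0:ℝ) < s ^ k := pow_pos hs k
    calc ((Y ω).choose k : ℝ) = ((Y ω).choose k * s ^ k) / s ^ k := by field_simp
      _ ≤ R ^ Y ω / s ^ k := by gcongr
      _ = (s ^ k)⁻¹ * R ^ Y ω := by ring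
  have hmeas : ∀ f : ℕ → ℂ, AEStronglyMeasurable (fun ω => f (Y ω)) μ :=
    fun f => ((measurable_from_nat (f := f)).comp hY).aestronglyMeasurable
  have hintC : ∀ k : ℕ, Integrable (fun ω => ((Y ω).choose k : ℂ)) μ := by
    intro k
    refine Integrable.mono' (hint.const_mul ((s ^ k)⁻¹)) (hmeas fun n => (n.choose k : ℂ)) (ae_of_all _ fun ω => ?_)
    rw [Complex.norm_natCast]
    exact hbound k ω
  set a : ℕ → ℂ := fun k => ∫ ω, ((Y ω).choose k : ℂ) ∂μ with ha_def
  set c : ℕ → ℂ := fun n => (-1) ^ n * a (n + 1) with hc_def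
  set p := FormalMultilinearSeries.ofScalars ℂ c with hp_def
  have hMpos : (0 : ℝ) < M := by
    have h1 : (1 : ℝ) ≤ ∫ ω, R ^ Y ω ∂μ := by
      calc (1 : ℝ) = ∫ _ω, (1 : ℝ) ∂μ := by simp
        _ ≤ ∫ ω, R ^ Y ω ∂μ :=
          integral_mono (integrable_const 1) hint (fun ω => one_le_pow₀ hR.le)
    linarith
  have hanorm : ∀ k, ‖a k‖ ≤ M / s ^ k := by
    intro k
    have h1 : ‖a k‖ ≤ ∫ ω, ‖((Y ω).choose k : ℂ)‖ ∂μ := norm_integral_le_integral_norm _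
    have h2 : ∫ ω, ‖((Y ω).choose k : ℂ)‖ ∂μ ≤ ∫ ω, (s ^ k)⁻¹ * R ^ Y ω ∂μ := by
      refine integral_mono ((hintC k).norm) (hint.const_mul _) fun ω => ?_
      rw [Complex.norm_natCast]
      exact hbound k ω
    have h3 : ∫ ω, (s ^ k)⁻¹ * R ^ Y ω ∂μ = (s ^ k)⁻¹ * ∫ ω, R ^ Y ω ∂μ :=
      integral_const_mul _ _
    have hsk : (0:ℝ) < s ^ k := pow_pos hs k
    calc ‖a k‖ ≤ (s ^ k)⁻¹ * ∫ ω, R ^ Y ω ∂μ := by rw [← h3]; exact h1.trans h2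
      _ ≤ (s ^ k)⁻¹ * M := by gcongr
      _ = M / s ^ k := by ring
  have hcnorm : ∀ n, ‖c n‖ ≤ M / s ^ (n + 1) := by
    intro n
    rw [hc_def]
    simp only [norm_mul, norm_pow, norm_neg, norm_one, one_pow, one_mul]
    exact hanorm (n + 1)
  -- radius bound
  have hrad : ENNReal.ofReal s ≤ p.radius := by
    refine ENNReal.le_of_forall_nnreal_lt fun r hr => ?_
    have hrs : (r : ℝ) < s := by
      rwa [← ENNReal.ofReal_coe_nnreal, ENNReal.ofReal_lt_ofReal_iff hs] at hr
    refine p.le_radius_of_bound (M / s) fun n => ?_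
    have h1 : ‖p n‖ = ‖c n‖ := FormalMultilinearSeries.ofScalars_norm ℂ c n
    rw [h1]
    have hsn : (0:ℝ) < s ^ n := pow_pos hs n
    calc ‖c n‖ * (r : ℝ) ^ n ≤ (M / s ^ (n + 1)) * s ^ n :=
        mul_le_mul (hcnorm n) (pow_le_pow_left₀ r.coe_nonneg hrs.le n) (by positivity)
          (by positivity)
      _ = M / s := by field_simp; ring
  have hradpos : (0 : ℝ≥0∞) < p.radius :=
    lt_of_lt_of_le (by simp [ENNReal.ofReal_pos, hs]) hrad
  have hps : HasFPowerSeriesOnBall p.sum p 0 (ENNReal.ofReal s) :=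
    (p.hasFPowerSeriesOnBall hradpos).mono (by simp [ENNReal.ofReal_pos, hs]) hrad
  -- the tsum formula for p.sum
  have hsum_formula : ∀ x : ℂ, p.sum x = ∑' n : ℕ, (-1) ^ n * a (n + 1) * x ^ n := by
    intro x
    have h1 := FormalMultilinearSeries.ofScalars_sum_eq (E := ℂ) c x
    have h2 : FormalMultilinearSeries.ofScalarsSum (E := ℂ) c x = p.sum x := rfl
    rw [← h2, h1]
    exact tsum_congr fun n => by rw [hc_def]; simp [smul_eq_mul]
  have ha0 : a 0 = 1 := by
    rw [ha_def]
    simp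
  -- summability of the expansion
  have hsummable : ∀ x : ℂ, ‖x‖ < s → Summable (fun k : ℕ => a k * (-x) ^ k) := by
    intro x hx
    refine Summable.of_norm_bounded (g := fun k => M * (‖x‖ / s) ^ k) ?_ ?_
    · exact (summable_geometric_of_lt_one (by positivity) (by
        rw [div_lt_one hs]; exact hx)).mul_left M
    · intro k
      rw [norm_mul, norm_pow, norm_neg]
      calc ‖a k‖ * ‖x‖ ^ k ≤ (M / s ^ k) * ‖x‖ ^ k := by
            have := pow_nonneg (norm_nonneg x) k
            exact mul_le_mul_of_nonneg_right (hanorm k) this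
        _ = M * (‖x‖ / s) ^ k := by rw [div_pow]; ring
  -- the key integral identity
  have key : ∀ x : ℂ, ‖x‖ < s → ∫ ω, (1 - x) ^ Y ω ∂μ = 1 - x * p.sum x := by
    intro x hx
    -- pointwise expansion
    have hpt : ∀ ω, HasSum (fun k => ((Y ω).choose k : ℂ) * (-x) ^ k) ((1 - x) ^ Y ω) := by
      intro ω
      have hfin : (1 - x) ^ Y ω =
          ∑ k ∈ Finset.range (Y ω + 1), ((Y ω).choose k : ℂ) * (-x) ^ k := by
        rw [sub_eq_neg_add, add_pow]
        exact Finset.sum_congr rfl fun k _ => by ring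
      rw [hfin]
      refine hasSum_sum_of_ne_finset_zero fun k hk => ?_
      have hlt : Y ω < k := by simp only [Finset.mem_range] at hk; omega
      simp [Nat.choose_eq_zero_of_lt hlt]
    -- swap integral and sum
    have hswap : ∫ ω, (1 - x) ^ Y ω ∂μ = ∑' k : ℕ, a k * (-x) ^ k := by
      have heq : (fun ω => (1 - x) ^ Y ω) =
          fun ω => ∑' k : ℕ, ((Y ω).choose k : ℂ) * (-x) ^ k :=
        funext fun ω => (hpt ω).tsum_eq.symm
      rw [heq]
      rw [integral_tsum (fun k => ((hmeas fun n => (n.choose k : ℂ)).mul_const _)) ?_]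
      · exact tsum_congr fun k => integral_mul_const _ _
      -- finiteness
      · have hmeas' : ∀ k : ℕ, AEMeasurable
            (fun ω => (‖((Y ω).choose k : ℂ) * (-x) ^ k‖ₑ : ENNReal)) μ := fun k =>
          ((measurable_from_nat
            (f := fun n : ℕ => ((‖(n.choose k : ℂ) * (-x) ^ k‖ₑ : ENNReal)))).comp hY).aemeasurable
        rw [← lintegral_tsum hmeas']
        have hptn : ∀ ω, HasSum (fun k => ((Y ω).choose k : ℝ≥0) * ‖x‖₊ ^ k)
            ((1 + ‖x‖₊) ^ Y ω) := by
          intro ω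
          have hfin : (1 + ‖x‖₊) ^ Y ω =
              ∑ k ∈ Finset.range (Y ω + 1), ((Y ω).choose k : ℝ≥0) * ‖x‖₊ ^ k := by
            rw [add_comm (1 : ℝ≥0), add_pow]
            exact Finset.sum_congr rfl fun k _ => by rw [one_pow, mul_one, mul_comm]
          rw [hfin]
          refine hasSum_sum_of_ne_finset_zero fun k hk => ?_
          have hlt : Y ω < k := by simp only [Finset.mem_range] at hk; omega
          simp [Nat.choose_eq_zero_of_lt hlt]
        have hle : ∀ n : ℕ, ((1 + ‖x‖₊) ^ n : ℝ≥0) ≤ ‖R ^ n‖₊ := by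
          intro n
          rw [← NNReal.coe_le_coe]
          push_cast
          rw [Real.norm_eq_abs, abs_of_pos (pow_pos hRpos n)]
          refine pow_le_pow_left₀ (by positivity) ?_ n
          have hcoe : (‖x‖₊ : ℝ) = ‖x‖ := rfl
          rw [hcoe, hs_def] at *
          linarith
        refine ne_of_lt ?_
        calc ∫⁻ ω, ∑' k : ℕ, (‖((Y ω).choose k : ℂ) * (-x) ^ k‖₊ : ENNReal) ∂μ
            = ∫⁻ ω, (((1 + ‖x‖₊) ^ Y ω : ℝ≥0) : ENNReal) ∂μ := by
              refine lintegral_congr fun ω => ?_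
              rw [← (hptn ω).tsum_eq, ENNReal.coe_tsum (hptn ω).summable]
              refine tsum_congr fun k => ?_
              congr 1
              simp [nnnorm_mul, nnnorm_pow]
          _ ≤ ∫⁻ ω, (‖R ^ Y ω‖₊ : ENNReal) ∂μ := by
              refine lintegral_mono fun ω => ?_
              exact ENNReal.coe_le_coe.mpr (hle (Y ω))
          _ < ⊤ := hint.hasFiniteIntegral
    -- rearrange
    rw [hswap, Summable.tsum_eq_zero_add (hsummable x hx), ha0, pow_zero, mul_one,
      hsum_formula x]
    have hterm : ∀ k : ℕ, a (k + 1) * (-x) ^ (k + 1) =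
        -(x * ((-1) ^ k * a (k + 1) * x ^ k)) := by
      intro k
      rw [neg_pow, neg_pow, pow_succ, pow_succ]
      ring
    rw [tsum_congr hterm, tsum_neg, ← tsum_mul_left]
    ring
  -- assemble
  refine ⟨p.sum, ?_, ?_, ?_, ?_, ?_⟩
  · have := hps.analyticOnNhd
    rwa [Metric.emetric_ball] at this
  · intro x hx hx0
    have hxs : ‖x‖ < s := by rwa [mem_ball_zero_iff] at hx
    rw [key x hxs]
    field_simp
    ring
  · have h1 : p.sum 0 = c 0 • (1 : ℂ) :=
      FormalMultilinearSeries.ofScalarsSum_zero (E := ℂ) c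
    rw [h1, hc_def]
    simp only [pow_zero, one_mul, smul_eq_mul, mul_one, ha_def]
    refine integral_congr_ae (ae_of_all _ fun ω => ?_)
    simp
  · intro x hx
    rw [hsum_formula x]
  · have hat : HasFPowerSeriesAt p.sum p 0 := hps.hasFPowerSeriesAt
    rw [hat.deriv]
    have h1 : (p 1 fun _ => (1 : ℂ)) = c 1 := by
      rw [hp_def]
      simpa using FormalMultilinearSeries.ofScalars_apply_eq (E := ℂ) c 1 1
    have hc1 : c 1 = -a 2 := by rw [hc_def]; norm_num
    have ha2 : a 2 = (∫ ω, (Y ω : ℂ) * ((Y ω : ℂ) - 1) ∂μ) / 2 := by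
      rw [ha_def]
      simp only
      rw [← integral_div]
      refine integral_congr_ae (ae_of_all _ fun ω => ?_)
      simp only [Nat.cast_choose_two]
    rw [h1, hc1, ha2]
    ring
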